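/- arXiv:2002.12836 — 2 statements merged into one kernel-verified Lean document; each statement's English description precedes it below -/
import Mathlib

section
/- For the angular momentum operators, the Bessel–Fischer product satisfies ⟨L_{ij} p, q⟩_B = −⟨p, L_{ij} q⟩_B for i, j ∈ {1,…,m−1} and ⟨L_{0i} p, q⟩_B = ⟨p, L_{0i} q⟩_B for i ∈ {1,…,m−1}, for all polynomials p, q in ℂ[z_0,…,z_{m−1}]. -/
open MvPolynomial

noncomputable section
set_option linter.unusedSectionVars false
set_option maxHeartbeats 1000000

/-- Complex polynomials in the variables `z_0, …, z_{m−1}`. -/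
abbrev Pm (m : ℕ) := MvPolynomial (Fin m) ℂ

/-- The diagonal entries of the bilinear form `β`: `β_{00} = −1`, `β_{kk} = 1` for `k ≥ 1`. -/
def sgn (m : ℕ) (i : Fin m) : ℂ := if (i : ℕ) = 0 then -1 else 1

/-- The plain partial derivative `∂^i` as a linear operator. -/
def DOp (m : ℕ) (i : Fin m) : Module.End ℂ (Pm m) := (pderiv i).toLinearMap

/-- The lowered partial derivative `∂_i = ∑_k β_{ik} ∂^k`. -/
def dlow (m : ℕ) (i : Fin m) : Module.End ℂ (Pm m) := sgn m i • DOp m i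

/-- Multiplication by the variable `z_i`. -/
def mulX (m : ℕ) (i : Fin m) : Module.End ℂ (Pm m) := LinearMap.mulLeft ℂ (X i)

/-- The Euler operator `E = ∑_{i,j} β^{ij} z_i ∂_j`. -/
def EOp (m : ℕ) : Module.End ℂ (Pm m) := ∑ i, sgn m i • (mulX m i * dlow m i)

/-- The Laplacian `Δ = ∑_{i,j} β^{ij} ∂_i ∂_j`. -/
def LapOp (m : ℕ) : Module.End ℂ (Pm m) := ∑ i, sgn m i • (dlow m i * dlow m i)

/-- The Bessel operator `B(z_i) = (m − 2 + 2E)∂_i − z_i Δ` (parameter `λ = 2 − m`). -/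
def BOp (m : ℕ) (i : Fin m) : Module.End ℂ (Pm m) :=
  (((m : ℂ) - 2) • (1 : Module.End ℂ (Pm m)) + (2 : ℂ) • EOp m) * dlow m i
    - mulX m i * LapOp m

/-- The modified Bessel operator: `B̃(z_0) = −B(z_0)`, `B̃(z_k) = B(z_k)` for `k ≥ 1`. -/
def BtOp (m : ℕ) (i : Fin m) : Module.End ℂ (Pm m) := sgn m i • BOp m i

/-- The Bessel–Fischer product `⟨p,q⟩_B := (p(B̃) q̄)(0)`: substitute the modified
Bessel operators for the variables of `p`, apply to the coefficient-conjugate of `q`,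
and evaluate at `0`. -/
def BF (m : ℕ) (p q : Pm m) : ℂ :=
  eval (0 : Fin m → ℂ)
    (((∑ α ∈ p.support, p.coeff α • (List.ofFn fun i : Fin m => (BtOp m i) ^ (α i)).prod) :
        Module.End ℂ (Pm m)) (map (starRingEnd ℂ) q))

/-- The angular momentum operator `L_{ij} = z_i ∂_j − z_j ∂_i`. -/
def LOp (m : ℕ) (i j : Fin m) : Module.End ℂ (Pm m) :=
  mulX m i * dlow m j - mulX m j * dlow m i

/-- The squared radial coordinate `R² = ∑_{i,j} β^{ij} z_i z_j`. -/
def R2 (m : ℕ) : Pm m := ∑ i, sgn m i • (X i * X i)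

-- ============ commutator infrastructure ============
section Com
variable {A : Type*} [Ring A] [Algebra ℂ A]

/-- commutator -/
def Com (x y : A) : A := x * y - y * x

lemma Com_def (x y : A) : Com x y = x * y - y * x := rfl

lemma mul_eq_Com (x y : A) : x * y = y * x + Com x y := by simp [Com]

lemma Com_mul_left (x y z : A) : Com (x * y) z = x * Com y z + Com x z * y := by
  simp only [Com, mul_sub, sub_mul, mul_assoc]; abel

lemma Com_mul_right (x y z : A) : Com x (y * z) = Com x y * z + y * Com x z := by
  simp only [Com, mul_sub, sub_mul, mul_assoc]; abel

lemma Com_add_left (x y z : A) : Com (x + y) z = Com x z + Com y z := by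
  simp only [Com, add_mul, mul_add]; abel

lemma Com_add_right (x y z : A) : Com x (y + z) = Com x y + Com x z := by
  simp only [Com, add_mul, mul_add]; abel

lemma Com_sub_left (x y z : A) : Com (x - y) z = Com x z - Com y z := by
  simp only [Com, sub_mul, mul_sub]; abel

lemma Com_sub_right (x y z : A) : Com x (y - z) = Com x y - Com x z := by
  simp only [Com, sub_mul, mul_sub]; abel

lemma Com_smul_left (c : ℂ) (x y : A) : Com (c • x) y = c • Com x y := by
  simp only [Com, smul_mul_assoc, mul_smul_comm, smul_sub]

lemma Com_smul_right (c : ℂ) (x y : A) : Com x (c • y) = c • Com x y := by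
  simp only [Com, smul_mul_assoc, mul_smul_comm, smul_sub]

lemma neg_one_mul_sub_aux {A : Type*} [Ring A] [Algebra ℂ A] (c1 c2 : ℂ) (u v : A) :
    (-(c1 • 1)) * u - (-(c2 • 1)) * v = c2 • v - c1 • u := by
  rw [neg_mul, neg_mul, smul_mul_assoc, smul_mul_assoc, one_mul, one_mul]; abel

lemma neg_smul_one_mul_aux {A : Type*} [Ring A] [Algebra ℂ A] (a : ℂ) (d : A)
    (h : a * a = 1) : a • (-(a • 1) * d) = -d := by
  rw [neg_mul, smul_mul_assoc, one_mul, smul_neg, smul_smul, h, one_smul]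

lemma Com_one_left (x : A) : Com 1 x = 0 := by simp [Com]
lemma Com_one_right (x : A) : Com x 1 = 0 := by simp [Com]

lemma Com_skew (x y : A) : Com x y = - Com y x := by rw [Com, Com, neg_sub]

lemma Com_sum_left {ι : Type*} (s : Finset ι) (f : ι → A) (y : A) :
    Com (∑ i ∈ s, f i) y = ∑ i ∈ s, Com (f i) y := by
  simp only [Com, Finset.sum_mul, Finset.mul_sum, Finset.sum_sub_distrib]

lemma Com_sum_right {ι : Type*} (s : Finset ι) (f : ι → A) (y : A) :
    Com y (∑ i ∈ s, f i) = ∑ i ∈ s, Com y (f i) := by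
  simp only [Com, Finset.sum_mul, Finset.mul_sum, Finset.sum_sub_distrib]

end Com

-- ============ basic relations ============
section Basic
variable (m : ℕ)

lemma sgn_mul_self (i : Fin m) : sgn m i * sgn m i = 1 := by
  unfold sgn; split_ifs <;> norm_num

lemma sgn_conj (i : Fin m) : (starRingEnd ℂ) (sgn m i) = sgn m i := by
  unfold sgn; split_ifs <;> simp

lemma pd_comm (i j : Fin m) (p : Pm m) :
    pderiv i (pderiv j p) = pderiv j (pderiv i p) := by
  induction p using MvPolynomial.induction_on with
  | C a => simp
  | add p q hp hq => simp [hp, hq]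
  | mul_X p k hp =>
      simp only [pderiv_mul, map_add, hp, pderiv_X, Pi.single_apply]
      split_ifs <;> simp <;> ring

lemma Com_D_x (i j : Fin m) :
    Com (DOp m i) (mulX m j) = (if i = j then (1 : ℂ) else 0) • 1 := by
  apply LinearMap.ext; intro p
  simp only [Com, DOp, mulX, LinearMap.sub_apply, Module.End.mul_apply,
    LinearMap.mulLeft_apply, LinearMap.smul_apply, Module.End.one_apply,
    Derivation.coeFn_coe, pderiv_mul, pderiv_X, Pi.single_apply]
  split_ifs <;> simp_all

lemma Com_d_x (i j : Fin m) :
    Com (dlow m i) (mulX m j) = (if i = j then sgn m i else 0) • 1 := by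
  rw [dlow, Com_smul_left, Com_D_x]
  rw [smul_smul]
  congr 1
  split_ifs <;> simp

lemma Com_x_d (i j : Fin m) :
    Com (mulX m i) (dlow m j) = -((if j = i then sgn m j else 0) • 1) := by
  rw [Com_skew, Com_d_x]

lemma D_mul_D (i j : Fin m) : DOp m i * DOp m j = DOp m j * DOp m i := by
  apply LinearMap.ext; intro p
  simp only [DOp, Module.End.mul_apply, Derivation.coeFn_coe]
  exact pd_comm m i j p

lemma d_mul_d (i j : Fin m) : dlow m i * dlow m j = dlow m j * dlow m i := by
  unfold dlow
  simp only [smul_mul_assoc, mul_smul_comm, D_mul_D]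
  rw [smul_comm]

lemma Com_d_d (i j : Fin m) : Com (dlow m i) (dlow m j) = 0 := by
  rw [Com_def, d_mul_d, sub_self]

lemma Com_x_x (i j : Fin m) : Com (mulX m i) (mulX m j) = 0 := by
  unfold mulX
  have : ∀ a b : Pm m, LinearMap.mulLeft ℂ a * LinearMap.mulLeft ℂ b
      = LinearMap.mulLeft ℂ (a * b) := by
    intro a b
    apply LinearMap.ext; intro p
    simp [Module.End.mul_apply, mul_assoc]
  rw [Com_def, this, this, mul_comm, sub_self]

-- E relations
lemma Com_E_x (k : Fin m) : Com (EOp m) (mulX m k) = mulX m k := by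
  rw [EOp, Com_sum_left]
  have : ∀ i : Fin m, Com (sgn m i • (mulX m i * dlow m i)) (mulX m k)
      = (if i = k then (1:ℂ) else 0) • mulX m i := by
    intro i
    rw [Com_smul_left, Com_mul_left, Com_x_x, Com_d_x]
    simp only [zero_mul, add_zero, mul_smul_comm, mul_one, smul_smul]
    congr 1
    split_ifs with h
    · rw [h, sgn_mul_self]
    · simp
  simp only [this, ite_smul, zero_smul, Finset.sum_ite_eq', Finset.mem_univ, if_true, one_smul]

lemma Com_E_d (k : Fin m) : Com (EOp m) (dlow m k) = -dlow m k := by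
  rw [EOp, Com_sum_left]
  have : ∀ i : Fin m, Com (sgn m i • (mulX m i * dlow m i)) (dlow m k)
      = -((if i = k then (1:ℂ) else 0) • dlow m i) := by
    intro i
    rw [Com_smul_left, Com_mul_left, Com_d_d, Com_x_d]
    simp only [mul_zero, zero_add, neg_mul, smul_mul_assoc, one_mul, smul_neg, smul_smul]
    congr 2
    split_ifs with h h2 h3
    · rw [h2, one_smul]
      exact neg_smul_one_mul_aux (sgn m k) (dlow m k) (sgn_mul_self m k)
    · exact absurd h.symm h2
    · exact absurd h3.symm h
    · simp
  simp only [this, ite_smul, zero_smul, Finset.sum_neg_distrib, Finset.sum_ite_eq',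
    Finset.mem_univ, if_true, one_smul]

-- Laplacian relations
lemma Com_Lap_x (k : Fin m) : Com (LapOp m) (mulX m k) = (2:ℂ) • dlow m k := by
  rw [LapOp, Com_sum_left]
  have : ∀ i : Fin m, Com (sgn m i • (dlow m i * dlow m i)) (mulX m k)
      = (if i = k then (2:ℂ) else 0) • dlow m i := by
    intro i
    rw [Com_smul_left, Com_mul_left, Com_d_x]
    simp only [mul_smul_comm, mul_one, smul_mul_assoc, one_mul, smul_add, smul_smul]
    rw [← add_smul]
    congr 1
    split_ifs with h
    · rw [h, sgn_mul_self]; norm_num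
    · simp
  simp only [this, ite_smul, zero_smul, Finset.sum_ite_eq', Finset.mem_univ, if_true]

lemma Com_Lap_d (k : Fin m) : Com (LapOp m) (dlow m k) = 0 := by
  rw [LapOp, Com_sum_left]
  have : ∀ i : Fin m, Com (sgn m i • (dlow m i * dlow m i)) (dlow m k) = 0 := by
    intro i
    rw [Com_smul_left, Com_mul_left, Com_d_d]
    simp
  simp [this]

lemma Com_Lap_E : Com (LapOp m) (EOp m) = (2:ℂ) • LapOp m := by
  rw [EOp, Com_sum_right]
  have : ∀ k : Fin m, Com (LapOp m) (sgn m k • (mulX m k * dlow m k))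
      = sgn m k • ((2:ℂ) • (dlow m k * dlow m k)) := by
    intro k
    rw [Com_smul_right, Com_mul_right, Com_Lap_x, Com_Lap_d]
    simp [smul_mul_assoc]
  simp only [this]
  rw [LapOp, Finset.smul_sum]
  apply Finset.sum_congr rfl
  intro k _
  rw [smul_comm]

def AOp (m : ℕ) : Module.End ℂ (Pm m) :=
  ((m : ℂ) - 2) • (1 : Module.End ℂ (Pm m)) + (2 : ℂ) • EOp m

lemma BOp_eq (i : Fin m) : BOp m i = AOp m * dlow m i - mulX m i * LapOp m := rfl

lemma Com_A_x (k : Fin m) : Com (AOp m) (mulX m k) = (2:ℂ) • mulX m k := by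
  rw [AOp, Com_add_left, Com_smul_left, Com_one_left, Com_smul_left, Com_E_x]
  simp

lemma Com_A_d (k : Fin m) : Com (AOp m) (dlow m k) = (-2:ℂ) • dlow m k := by
  rw [AOp, Com_add_left, Com_smul_left, Com_one_left, Com_smul_left, Com_E_d]
  rw [smul_zero, zero_add]
  module

lemma Com_Lap_A : Com (LapOp m) (AOp m) = (4:ℂ) • LapOp m := by
  rw [AOp, Com_add_right, Com_smul_right, Com_one_right, Com_smul_right, Com_Lap_E]
  rw [smul_zero, zero_add, smul_smul]
  norm_num

lemma Com_L_x (i j k : Fin m) : Com (LOp m i j) (mulX m k)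
    = (if j = k then sgn m j else 0) • mulX m i
      - (if i = k then sgn m i else 0) • mulX m j := by
  rw [LOp, Com_sub_left, Com_mul_left, Com_mul_left, Com_x_x, Com_x_x, Com_d_x, Com_d_x]
  simp only [zero_mul, add_zero, mul_smul_comm, mul_one]

lemma Com_L_d (i j k : Fin m) : Com (LOp m i j) (dlow m k)
    = (if k = j then sgn m k else 0) • dlow m i
      - (if k = i then sgn m k else 0) • dlow m j := by
  rw [LOp, Com_sub_left, Com_mul_left, Com_mul_left, Com_d_d, Com_d_d, Com_x_d, Com_x_d]
  simp only [mul_zero, zero_add]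
  exact neg_one_mul_sub_aux _ _ _ _

lemma Com_L_E (i j : Fin m) : Com (LOp m i j) (EOp m) = 0 := by
  rw [EOp, Com_sum_right]
  simp only [Com_smul_right, Com_mul_right, Com_L_x, Com_L_d]
  simp only [sub_mul, mul_sub, smul_mul_assoc, mul_smul_comm, ite_smul, zero_smul,
    smul_ite, smul_zero, smul_sub, smul_add, sub_zero, zero_sub, smul_neg,
    Finset.sum_sub_distrib, Finset.sum_add_distrib, Finset.sum_ite_eq, Finset.sum_ite_eq',
    Finset.mem_univ, if_true, smul_smul, sgn_mul_self]
  simp only [ite_mul, mul_ite, zero_mul, mul_zero, smul_ite, smul_zero,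
    Finset.sum_ite_eq, Finset.sum_ite_eq', Finset.mem_univ, if_true,
    smul_mul_assoc, mul_smul_comm, smul_smul, sgn_mul_self, one_smul]
  abel

lemma Com_L_Lap (i j : Fin m) : Com (LOp m i j) (LapOp m) = 0 := by
  rw [LapOp, Com_sum_right]
  simp only [Com_smul_right, Com_mul_right, Com_L_d]
  simp only [sub_mul, mul_sub, smul_mul_assoc, mul_smul_comm, ite_smul, zero_smul,
    smul_ite, smul_zero, smul_sub, smul_add, sub_zero, zero_sub, smul_neg,
    Finset.sum_sub_distrib, Finset.sum_add_distrib, Finset.sum_ite_eq, Finset.sum_ite_eq',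
    Finset.mem_univ, if_true, smul_smul, sgn_mul_self]
  simp only [ite_mul, mul_ite, zero_mul, mul_zero, smul_ite, smul_zero,
    Finset.sum_ite_eq, Finset.sum_ite_eq', Finset.mem_univ, if_true,
    smul_mul_assoc, mul_smul_comm, smul_smul, sgn_mul_self, one_smul]
  abel

lemma Com_L_A (i j : Fin m) : Com (LOp m i j) (AOp m) = 0 := by
  rw [AOp, Com_add_right, Com_smul_right, Com_one_right, Com_smul_right, Com_L_E]
  simp

lemma sgn_ite_comm (a b : Fin m) :
    (if a = b then sgn m a else 0) = (if b = a then sgn m b else 0) := by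
  by_cases h : a = b
  · subst h; rfl
  · rw [if_neg h, if_neg fun hh => h hh.symm]

lemma Com_L_B (i j k : Fin m) : Com (LOp m i j) (BOp m k)
    = (if k = j then sgn m k else 0) • BOp m i
      - (if k = i then sgn m k else 0) • BOp m j := by
  rw [BOp_eq, Com_sub_right, Com_mul_right, Com_mul_right, Com_L_A, Com_L_Lap,
    Com_L_d, Com_L_x, BOp_eq, BOp_eq]
  simp only [zero_mul, zero_add, mul_zero, add_zero, mul_sub, mul_smul_comm,
    sub_mul, smul_mul_assoc, smul_sub]
  rw [sgn_ite_comm m j k, sgn_ite_comm m i k]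
  abel

lemma Com_self {A : Type*} [Ring A] [Algebra ℂ A] (x : A) : Com x x = 0 := by
  simp [Com]

lemma Com_d_A (k : Fin m) : Com (dlow m k) (AOp m) = (2:ℂ) • dlow m k := by
  rw [Com_skew, Com_A_d]
  module

lemma Com_d_Lap (k : Fin m) : Com (dlow m k) (LapOp m) = 0 := by
  rw [Com_skew, Com_Lap_d, neg_zero]

lemma Com_x_Lap (k : Fin m) : Com (mulX m k) (LapOp m) = (-2:ℂ) • dlow m k := by
  rw [Com_skew, Com_Lap_x]
  module

lemma Com_A_Lap : Com (AOp m) (LapOp m) = (-4:ℂ) • LapOp m := by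
  rw [Com_skew, Com_Lap_A]
  module

lemma Lap_mul_d (k : Fin m) : LapOp m * dlow m k = dlow m k * LapOp m := by
  have := Com_Lap_d m k
  rw [Com_def, sub_eq_zero] at this
  exact this

lemma e1 (k : Fin m) : Com (AOp m * dlow m k) (AOp m) = (2:ℂ) • (AOp m * dlow m k) := by
  rw [Com_mul_left, Com_d_A, Com_self, zero_mul, add_zero, mul_smul_comm]

lemma e2 (k l : Fin m) :
    Com (AOp m * dlow m k) (dlow m l) = (-2:ℂ) • (dlow m l * dlow m k) := by
  rw [Com_mul_left, Com_d_d, Com_A_d, mul_zero, zero_add, smul_mul_assoc]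

lemma c1 (k l : Fin m) : Com (AOp m * dlow m k) (AOp m * dlow m l) = 0 := by
  rw [Com_mul_right, e1, e2, smul_mul_assoc, mul_assoc, mul_smul_comm, d_mul_d m l k]
  module

lemma e3 (k l : Fin m) : Com (AOp m * dlow m k) (mulX m l)
    = (if k = l then sgn m k else 0) • AOp m + (2:ℂ) • (mulX m l * dlow m k) := by
  rw [Com_mul_left, Com_d_x, Com_A_x, mul_smul_comm, mul_one, smul_mul_assoc]

lemma e4 (k : Fin m) :
    Com (AOp m * dlow m k) (LapOp m) = (-4:ℂ) • (dlow m k * LapOp m) := by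
  rw [Com_mul_left, Com_d_Lap, Com_A_Lap, mul_zero, zero_add, smul_mul_assoc,
    Lap_mul_d]

lemma c2 (k l : Fin m) : Com (AOp m * dlow m k) (mulX m l * LapOp m)
    = (if k = l then sgn m k else 0) • (AOp m * LapOp m)
      - (2:ℂ) • (mulX m l * (dlow m k * LapOp m)) := by
  rw [Com_mul_right, e3, e4, add_mul, smul_mul_assoc, smul_mul_assoc, mul_assoc,
    mul_smul_comm]
  module

lemma c3 (k l : Fin m) : Com (mulX m k * LapOp m) (mulX m l * LapOp m)
    = (2:ℂ) • (mulX m k * (dlow m l * LapOp m))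
      - (2:ℂ) • (mulX m l * (dlow m k * LapOp m)) := by
  have h1 : Com (mulX m k * LapOp m) (mulX m l) = (2:ℂ) • (mulX m k * dlow m l) := by
    rw [Com_mul_left, Com_Lap_x, Com_x_x, zero_mul, add_zero, mul_smul_comm]
  have h2 : Com (mulX m k * LapOp m) (LapOp m) = (-2:ℂ) • (dlow m k * LapOp m) := by
    rw [Com_mul_left, Com_self, Com_x_Lap, mul_zero, zero_add, smul_mul_assoc]
  rw [Com_mul_right, h1, h2, smul_mul_assoc, mul_assoc, mul_smul_comm]
  module

lemma Com_B_B (k l : Fin m) : Com (BOp m k) (BOp m l) = 0 := by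
  rw [BOp_eq, BOp_eq, Com_sub_left, Com_sub_right, Com_sub_right, c1, c2,
    Com_skew (mulX m k * LapOp m) (AOp m * dlow m l), c2, c3, sgn_ite_comm m k l]
  module

lemma B_mul_B (k l : Fin m) : BOp m k * BOp m l = BOp m l * BOp m k := by
  have := Com_B_B m k l
  rw [Com_def, sub_eq_zero] at this
  exact this

lemma bt_commute (k l : Fin m) : Commute (BtOp m k) (BtOp m l) := by
  unfold BtOp Commute SemiconjBy
  rw [smul_mul_assoc, smul_mul_assoc, mul_smul_comm, mul_smul_comm, B_mul_B m k l]
  rw [smul_comm]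

lemma Com_L_Bt (i j k : Fin m) : Com (LOp m i j) (BtOp m k)
    = (if k = j then sgn m i else 0) • BtOp m i
      - (if k = i then sgn m j else 0) • BtOp m j := by
  rw [BtOp, Com_smul_right, Com_L_B, BtOp, BtOp, smul_sub, smul_smul, smul_smul,
    smul_smul, smul_smul]
  congr 2
  · by_cases h : k = j
    · subst h; rw [if_pos rfl, if_pos rfl, sgn_mul_self, sgn_mul_self]
    · simp [h]
  · by_cases h : k = i
    · subst h; rw [if_pos rfl, if_pos rfl, sgn_mul_self, sgn_mul_self]
    · simp [h]

def psi (α : Fin m →₀ ℕ) : Module.End ℂ (Pm m) :=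
  Finset.univ.noncommProd (fun i => BtOp m i ^ α i)
    (fun a _ b _ _ => Commute.pow_pow (bt_commute m a b) _ _)

lemma psi_eq_list (α : Fin m →₀ ℕ) :
    psi m α = (List.ofFn fun i : Fin m => BtOp m i ^ α i).prod := by
  rw [psi, List.ofFn_eq_map, ← Multiset.noncommProd_coe]
  rfl

lemma psi_zero : psi m 0 = 1 := by
  rw [psi]
  exact (Finset.noncommProd_eq_pow_card _ _ _ 1 (by intro x _; simp)).trans (one_pow _)

lemma psi_add (α β : Fin m →₀ ℕ) : psi m (α + β) = psi m α * psi m β := by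
  rw [psi, psi, psi,
    ← Finset.noncommProd_mul_distrib _ _
      (fun a _ b _ _ => Commute.pow_pow (bt_commute m a b) _ _)
      (fun a _ b _ _ => Commute.pow_pow (bt_commute m a b) _ _)
      (fun a _ b _ _ => Commute.pow_pow (bt_commute m a b) _ _)]
  exact Finset.noncommProd_congr rfl (fun x _ => by simp [pow_add]) _

lemma psi_single (k : Fin m) : psi m (Finsupp.single k 1) = BtOp m k := by
  rw [psi]
  refine (Finset.mul_noncommProd_erase _ (Finset.mem_univ k) _ _).symm.trans ?_
  refine (congrArg (HMul.hMul (BtOp m k ^ (Finsupp.single k 1) k))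
    (Finset.noncommProd_eq_pow_card _ _ _ 1 ?h)).trans ?main
  case main => rw [one_pow, mul_one, Finsupp.single_eq_same, pow_one]
  case h =>
    intro x hx
    rw [Finsupp.single_eq_of_ne fun hh => (Finset.mem_erase.mp hx).1 hh, pow_zero]

lemma psi_add_single (α : Fin m →₀ ℕ) (k : Fin m) :
    psi m (α + Finsupp.single k 1) = psi m α * BtOp m k := by
  rw [psi_add, psi_single]

def Phi : Pm m →ₗ[ℂ] Module.End ℂ (Pm m) := Finsupp.linearCombination ℂ (psi m) ∘ₗ (AddMonoidAlgebra.coeffLinearEquiv ℂ).toLinearMap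

lemma Phi_apply (p : Pm m) : Phi m p = ∑ α ∈ p.support, p.coeff α • psi m α := rfl

lemma Phi_monomial (α : Fin m →₀ ℕ) (c : ℂ) :
    Phi m (monomial α c) = c • psi m α :=
  Finsupp.linearCombination_single ℂ c α

lemma BF_eq (p q : Pm m) :
    BF m p q = eval (0 : Fin m → ℂ) ((Phi m p) (map (starRingEnd ℂ) q)) := by
  have h : (∑ α ∈ p.support, p.coeff α • (List.ofFn fun i : Fin m =>
      (BtOp m i) ^ (α i)).prod) = Phi m p := by
    rw [Phi_apply]
    exact Finset.sum_congr rfl fun α _ => by rw [psi_eq_list]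
  rw [BF, h]

lemma Phi_mul_X (p : Pm m) (k : Fin m) :
    Phi m (p * X k) = Phi m p * BtOp m k := by
  induction p using MvPolynomial.induction_on' with
  | monomial α c =>
      have h : (monomial α c : Pm m) * X k = monomial (α + Finsupp.single k 1) c := by
        rw [X, monomial_mul, mul_one]
      rw [h, Phi_monomial, Phi_monomial, psi_add_single, smul_mul_assoc]
  | add p q hp hq =>
      rw [add_mul, map_add, map_add, hp, hq, add_mul]

lemma LOp_apply (i j : Fin m) (p : Pm m) :
    LOp m i j p = sgn m j • (X i * pderiv j p) - sgn m i • (X j * pderiv i p) := by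
  simp only [LOp, LinearMap.sub_apply, Module.End.mul_apply, dlow, DOp,
    LinearMap.smul_apply, Derivation.coeFn_coe, mulX, LinearMap.mulLeft_apply,
    mul_smul_comm]

lemma LOp_C (i j : Fin m) (a : ℂ) : LOp m i j (C a : Pm m) = 0 := by
  simp [LOp_apply]

lemma LOp_mul (i j : Fin m) (p q : Pm m) :
    LOp m i j (p * q) = LOp m i j p * q + p * LOp m i j q := by
  simp only [LOp_apply, pderiv_mul, Algebra.smul_def]
  ring

lemma LOp_X (i j k : Fin m) : LOp m i j (X k : Pm m)
    = (if k = j then sgn m j else 0) • (X i : Pm m)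
      - (if k = i then sgn m i else 0) • (X j : Pm m) := by
  simp only [LOp_apply, pderiv_X, Pi.single_apply]
  split_ifs <;> simp [Algebra.smul_def]

lemma Phi_L (i j : Fin m) (ε : ℂ) (hε : sgn m i * sgn m j = ε) (p : Pm m) :
    Phi m (LOp m i j p)
      = ε • (LOp m i j * Phi m p - Phi m p * LOp m i j) := by
  have h1 : ε * sgn m i = sgn m j := by
    calc ε * sgn m i = sgn m i * sgn m i * sgn m j := by rw [← hε]; ring
    _ = sgn m j := by rw [sgn_mul_self, one_mul]
  have h2 : ε * sgn m j = sgn m i := by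
    calc ε * sgn m j = sgn m j * sgn m j * sgn m i := by rw [← hε]; ring
    _ = sgn m i := by rw [sgn_mul_self, one_mul]
  induction p using MvPolynomial.induction_on with
  | C a =>
      rw [LOp_C, map_zero, C_apply, Phi_monomial, psi_zero, mul_smul_comm,
        smul_mul_assoc, mul_one, one_mul, sub_self, smul_zero]
  | add p q hp hq =>
      rw [map_add, map_add, map_add, hp, hq]
      simp only [mul_add, add_mul]
      module
  | mul_X p k hp =>
      rw [LOp_mul, map_add, Phi_mul_X m p k, Phi_mul_X m (LOp m i j p) k, LOp_X,
        mul_sub, mul_smul_comm, mul_smul_comm, map_sub, map_smul, map_smul,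
        Phi_mul_X m p i, Phi_mul_X m p j, hp]
      have expand : LOp m i j * (Phi m p * BtOp m k) - Phi m p * BtOp m k * LOp m i j
          = (LOp m i j * Phi m p - Phi m p * LOp m i j) * BtOp m k
            + Phi m p * Com (LOp m i j) (BtOp m k) := by
        simp only [Com_def, mul_sub, sub_mul, mul_assoc]
        abel
      rw [expand, Com_L_Bt]
      simp only [smul_add, smul_sub, mul_sub, mul_smul_comm, smul_smul, mul_ite,
        ite_mul, mul_zero, zero_mul, ite_smul, smul_ite, smul_zero, zero_smul,
        h1, h2, smul_mul_assoc]
      rw [← smul_sub, smul_mul_assoc]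

lemma eval0_LOp (i j : Fin m) (p : Pm m) :
    eval (0 : Fin m → ℂ) (LOp m i j p) = 0 := by
  simp [LOp_apply, smul_eval, eval_mul]

lemma map_conj_LOp (i j : Fin m) (p : Pm m) :
    map (starRingEnd ℂ) (LOp m i j p) = LOp m i j (map (starRingEnd ℂ) p) := by
  rw [LOp_apply, LOp_apply, Algebra.smul_def, Algebra.smul_def, Algebra.smul_def,
    Algebra.smul_def]
  simp only [map_sub, map_mul, map_X, algebraMap_eq, map_C, pderiv_map, sgn_conj]

end Basic


/-- `⟨L_{ij} p, q⟩_B = −⟨p, L_{ij} q⟩_B` for `i, j ∈ {1,…,m−1}` and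
`⟨L_{0i} p, q⟩_B = ⟨p, L_{0i} q⟩_B` for `i ∈ {1,…,m−1}`. -/
theorem stmt12 (m : ℕ) [NeZero m] :
    (∀ i j : Fin m, (i : ℕ) ≠ 0 → (j : ℕ) ≠ 0 → ∀ p q : Pm m,
      BF m (LOp m i j p) q = - BF m p (LOp m i j q)) ∧
    (∀ i : Fin m, (i : ℕ) ≠ 0 → ∀ p q : Pm m,
      BF m (LOp m 0 i p) q = BF m p (LOp m 0 i q)) := by
  constructor
  · intro i j hi hj p q
    have hsi : sgn m i = 1 := by rw [sgn, if_neg hi]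
    have hsj : sgn m j = 1 := by rw [sgn, if_neg hj]
    have key := Phi_L m i j 1 (by rw [hsi, hsj, one_mul]) p
    rw [BF_eq, BF_eq, key, one_smul, LinearMap.sub_apply, Module.End.mul_apply,
      Module.End.mul_apply, map_sub, eval0_LOp, zero_sub, ← map_conj_LOp]
  · intro i hi p q
    have hs0 : sgn m 0 = -1 := by rw [sgn, if_pos (Fin.val_zero m)]
    have hsi : sgn m i = 1 := by rw [sgn, if_neg hi]
    have key := Phi_L m 0 i (-1) (by rw [hs0, hsi, mul_one]) p
    rw [BF_eq, BF_eq, key, LinearMap.smul_apply, smul_eval, LinearMap.sub_apply,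
      Module.End.mul_apply, Module.End.mul_apply, map_sub, eval0_LOp, ← map_conj_LOp]
    ring
end
end

section
/- Let B_0(t) = Γ(m/2 − 1) ∑_{l≥0} t^l/(l! Γ(l + m/2 − 1)) and let (x|z) = 2x_0 z_0 + 2∑_{k=1}^{m−1} x_k z_k. Then the function B_0(x|z), viewed as a polynomial-series in z for fixed x, is an eigenfunction of the modified Bessel operators in z: B̃(z_i) B_0(x|z) = 4 x_i B_0(x|z) for all i ∈ {0,…,m−1}, where the identity holds coefficientwise in the formal power series expansion, modulo the ideal ⟨R²_x⟩ in the x-variables. -/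
open MvPolynomial

noncomputable section

/-- The coefficient `Γ(m/2 − 1)/(l! Γ(l + m/2 − 1))` of `(x|z)^l` in the series
expansion of `B_0(x|z)`. -/
def Bcoef (m : ℕ) (l : ℕ) : ℂ :=
  Complex.Gamma ((m : ℂ) / 2 - 1) /
    ((l.factorial : ℂ) * Complex.Gamma ((l : ℂ) + (m : ℂ) / 2 - 1))

/-- The polynomial `(x|z) = 2x_0 z_0 + 2∑_{k≥1} x_k z_k` in `z`, for fixed `x`. -/
def xz (m : ℕ) (x : Fin m → ℂ) : Pm m := ∑ i, C (2 * x i) * X i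

lemma sgn_sq (m : ℕ) (i : Fin m) : sgn m i * sgn m i = 1 := by
  unfold sgn; split <;> norm_num

lemma pd_xz (m : ℕ) (x : Fin m → ℂ) (i : Fin m) :
    pderiv i (xz m x) = C (2 * x i) := by
  classical
  rw [xz, map_sum]
  rw [Finset.sum_eq_single i]
  · simp
  · intro j _ hj
    simp [Pi.single_eq_of_ne hj]
  · simp

lemma pd_pow (m : ℕ) (x : Fin m → ℂ) (i : Fin m) (n : ℕ) :
    pderiv i ((xz m x) ^ (n + 1)) = (((n : ℂ) + 1) * (2 * x i)) • (xz m x) ^ n := by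
  rw [Derivation.leibniz_pow, pd_xz]
  simp only [Nat.add_sub_cancel, smul_eq_mul]
  rw [← Nat.cast_smul_eq_nsmul ℂ, mul_comm, ← smul_eq_C_mul, smul_smul]
  congr 1
  push_cast
  ring

lemma dlow_apply (m : ℕ) (i : Fin m) (q : Pm m) :
    dlow m i q = sgn m i • pderiv i q := by
  simp [dlow, DOp]

lemma EOp_apply (m : ℕ) (q : Pm m) :
    EOp m q = ∑ i, X i * pderiv i q := by
  rw [EOp, LinearMap.sum_apply]
  refine Finset.sum_congr rfl fun i _ => ?_
  rw [LinearMap.smul_apply, Module.End.mul_apply, dlow_apply]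
  show sgn m i • (X i * (sgn m i • pderiv i q)) = _
  rw [mul_smul_comm, smul_smul, sgn_sq, one_smul]

lemma EOp_pow (m : ℕ) (x : Fin m → ℂ) (n : ℕ) :
    EOp m ((xz m x) ^ n) = (n : ℂ) • (xz m x) ^ n := by
  cases n with
  | zero => simp [EOp_apply]
  | succ e =>
    rw [EOp_apply]
    have h : ∀ i : Fin m, X (R := ℂ) i * pderiv i ((xz m x) ^ (e + 1)) =
        ((e : ℂ) + 1) • (C (2 * x i) * X i * (xz m x) ^ e) := by
      intro i
      rw [pd_pow, mul_smul_comm, mul_assoc, ← smul_eq_C_mul, smul_smul]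
    simp only [h]
    rw [← Finset.smul_sum, ← Finset.sum_mul, ← xz, ← pow_succ']
    norm_cast

lemma Lap_apply (m : ℕ) (q : Pm m) :
    LapOp m q = ∑ i, sgn m i • pderiv i (pderiv i q) := by
  rw [LapOp, LinearMap.sum_apply]
  refine Finset.sum_congr rfl fun i _ => ?_
  rw [LinearMap.smul_apply, Module.End.mul_apply, dlow_apply m i q, dlow_apply,
    Derivation.map_smul, smul_smul, smul_smul, sgn_sq, one_mul]

lemma Lap_pow (m : ℕ) (x : Fin m → ℂ)
    (hx : (∑ i, sgn m i * x i * x i) = 0) (d : ℕ) :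
    LapOp m ((xz m x) ^ (d + 1)) = 0 := by
  rw [Lap_apply]
  cases d with
  | zero => simp [pd_xz]
  | succ e =>
    have h : ∀ i : Fin m, sgn m i • pderiv i (pderiv i ((xz m x) ^ (e + 1 + 1))) =
        (sgn m i * x i * x i) • ((((e : ℂ) + 2) * ((e : ℂ) + 1) * 4) • (xz m x) ^ e) := by
      intro i
      rw [pd_pow, Derivation.map_smul, pd_pow, smul_smul, smul_smul, smul_smul]
      congr 1
      push_cast
      ring
    simp only [h]
    rw [← Finset.sum_smul, hx, zero_smul]

lemma BtOp_pow (m : ℕ) (x : Fin m → ℂ)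
    (hx : (∑ i, sgn m i * x i * x i) = 0) (i : Fin m) (d : ℕ) :
    BtOp m i ((xz m x) ^ (d + 1)) =
      ((((m : ℂ) - 2) + 2 * d) * (((d : ℂ) + 1) * (2 * x i))) • (xz m x) ^ d := by
  rw [BtOp, LinearMap.smul_apply, BOp, LinearMap.sub_apply, Module.End.mul_apply,
    Module.End.mul_apply, Lap_pow m x hx, map_zero, sub_zero]
  rw [dlow_apply, pd_pow, map_smul, map_smul]
  rw [LinearMap.add_apply, LinearMap.smul_apply, LinearMap.smul_apply,
    Module.End.one_apply, EOp_pow]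
  rw [smul_smul, smul_smul, smul_smul, ← add_smul, smul_smul]
  congr 1
  linear_combination ((((m : ℂ) - 2) + 2 * d) * (((d : ℂ) + 1) * (2 * x i))) * sgn_sq m i

lemma Bcoef_rec (m : ℕ) (hm : 3 ≤ m) (d : ℕ) :
    Bcoef m (d + 1) * ((((m : ℂ) - 2) + 2 * d) * ((d : ℂ) + 1)) = 2 * Bcoef m d := by
  have h3 : (3 : ℝ) ≤ m := by exact_mod_cast hm
  have hd : (0 : ℝ) ≤ d := Nat.cast_nonneg d
  have hr : (0 : ℝ) < d + (m : ℝ) / 2 - 1 := by linarith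
  have hseq : ((d : ℂ) + (m : ℂ) / 2 - 1) = (((d : ℝ) + (m : ℝ) / 2 - 1 : ℝ) : ℂ) := by
    push_cast; ring
  have hs0 : ((d : ℂ) + (m : ℂ) / 2 - 1) ≠ 0 := by
    rw [hseq]; exact Complex.ofReal_ne_zero.mpr (ne_of_gt hr)
  have hΓ : Complex.Gamma ((d : ℂ) + (m : ℂ) / 2 - 1) ≠ 0 := by
    rw [hseq, Complex.Gamma_ofReal]
    exact_mod_cast (Real.Gamma_pos_of_pos hr).ne'
  have hgam : Complex.Gamma (((d + 1 : ℕ) : ℂ) + (m : ℂ) / 2 - 1)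
      = ((d : ℂ) + (m : ℂ) / 2 - 1) * Complex.Gamma ((d : ℂ) + (m : ℂ) / 2 - 1) := by
    rw [show (((d + 1 : ℕ) : ℂ) + (m : ℂ) / 2 - 1) = ((d : ℂ) + (m : ℂ) / 2 - 1) + 1 by
      push_cast; ring, Complex.Gamma_add_one _ hs0]
  have hfac : ((d + 1).factorial : ℂ) = ((d : ℂ) + 1) * (d.factorial : ℂ) := by
    rw [Nat.factorial_succ]; push_cast; ring
  have hfac0 : ((d.factorial : ℂ)) ≠ 0 := by exact_mod_cast d.factorial_ne_zero
  have hd1 : ((d : ℂ) + 1) ≠ 0 := by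
    have : ((d : ℂ) + 1) = (((d : ℝ) + 1 : ℝ) : ℂ) := by push_cast; ring
    rw [this]; exact Complex.ofReal_ne_zero.mpr (by positivity)
  rw [Bcoef, Bcoef, hgam, hfac, div_mul_eq_mul_div, mul_div_assoc',
    div_eq_div_iff (by exact mul_ne_zero (mul_ne_zero hd1 hfac0) (mul_ne_zero hs0 hΓ))
      (mul_ne_zero hfac0 hΓ)]
  ring


/-- `B_0(x|z)` is an eigenfunction of the modified Bessel operators in `z`,
`B̃(z_i) B_0(x|z) = 4x_i B_0(x|z)`, coefficientwise in the power series expansion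
`B_0(x|z) = ∑_d Bcoef d · (x|z)^d`, modulo `⟨R²_x⟩` in the `x`-variables (i.e., for
`x` on the null cone `R²_x = 0`). -/
theorem stmt17 (m : ℕ) (hm : 3 ≤ m) (x : Fin m → ℂ)
    (hx : (∑ i, sgn m i * x i * x i) = 0) :
    ∀ (i : Fin m) (d : ℕ),
      BtOp m i (Bcoef m (d + 1) • (xz m x) ^ (d + 1)) =
        ((4 : ℂ) * x i) • (Bcoef m d • (xz m x) ^ d) := by
  intro i d
  rw [map_smul, BtOp_pow m x hx, smul_smul, smul_smul]
  congr 1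
  linear_combination (2 * x i) * Bcoef_rec m hm d
end
end
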